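/- (Progressive Free Set Theorem) For every function h : ℕ → ℕ and every h-constrained progressive coloring f : [ℕ]^{≤h(·)} → [ℕ]^{<ω}, there exists an infinite set G ⊆ ℕ that is free for f, i.e., for every s ∈ [G]^{≤h(·)}, f(s) ∩ G ⊆ s. -/
import Mathlib

open Filter

/-- `s ∈ [ℕ]^{≤h(·)}`: `s` is nonempty and `|s| ≤ h (min s)`. -/
def InDom (h : ℕ → ℕ) (s : Finset ℕ) : Prop :=
  s.Nonempty ∧ s.card ≤ h (sInf (↑s : Set ℕ))

namespace Stmt16Aux

noncomputable def U : Ultrafilter ℕ := hyperfilter ℕ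

lemma cofinite_mem_U {s : Set ℕ} (hs : sᶜ.Finite) : s ∈ U :=
  Filter.hyperfilter_le_cofinite (Filter.mem_cofinite.2 hs)

/-- Iterated ultrafilter limit of `f` along `k` extra "large" coordinates. -/
noncomputable def D (f : Finset ℕ → Finset ℕ) : ℕ → Finset ℕ → Set ℕ
  | 0, t => ↑(f t)
  | k+1, t => {b | {x | (∀ y ∈ t, y < x) ∧ b ∈ D f k (insert x t)} ∈ U}

lemma sInf_coe_insert (t : Finset ℕ) (ht : t.Nonempty) {x : ℕ} (hx : ∀ y ∈ t, y < x) :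
    sInf (↑(insert x t) : Set ℕ) = sInf (↑t : Set ℕ) := by
  obtain ⟨y₀, hy₀⟩ := ht
  have hne : (↑(insert x t) : Set ℕ).Nonempty := ⟨y₀, by simp [hy₀]⟩
  have hmem := Nat.sInf_mem hne
  have hle : sInf (↑(insert x t) : Set ℕ) ≤ y₀ := Nat.sInf_le (by simp [hy₀])
  have hmem' : sInf (↑(insert x t) : Set ℕ) ∈ (↑t : Set ℕ) := by
    have hcases : sInf (↑(insert x t) : Set ℕ) = x ∨ sInf (↑(insert x t) : Set ℕ) ∈ t := by
      simpa using hmem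
    rcases hcases with h | h
    · exfalso; have := hx y₀ hy₀; omega
    · simpa using h
  have htne : (↑t : Set ℕ).Nonempty := ⟨y₀, by simpa using hy₀⟩
  apply le_antisymm
  · have h1 : sInf (↑t : Set ℕ) ∈ t := by simpa using Nat.sInf_mem htne
    have h2 : sInf (↑t : Set ℕ) ∈ (↑(insert x t) : Set ℕ) := by simp [h1]
    exact Nat.sInf_le h2
  · exact Nat.sInf_le hmem'

lemma D_ge (h : ℕ → ℕ) (f : Finset ℕ → Finset ℕ)
    (hprog : ∀ s : Finset ℕ, InDom h s → ∀ y ∈ f s, sInf (↑s : Set ℕ) ≤ y) :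
    ∀ (k : ℕ) (t : Finset ℕ), t.Nonempty → t.card + k ≤ h (sInf (↑t : Set ℕ)) →
      ∀ b ∈ D f k t, sInf (↑t : Set ℕ) ≤ b := by
  intro k
  induction k with
  | zero =>
    intro t ht hcard b hb
    exact hprog t ⟨ht, by omega⟩ b (by simpa [D] using hb)
  | succ k ih =>
    intro t ht hcard b hb
    have hb' : {x | (∀ y ∈ t, y < x) ∧ b ∈ D f k (insert x t)} ∈ U := hb
    obtain ⟨x, hx1, hx2⟩ := Filter.nonempty_of_mem hb'
    have hxnot : x ∉ t := fun hxt => lt_irrefl x (hx1 x hxt)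
    have hins : sInf (↑(insert x t) : Set ℕ) = sInf (↑t : Set ℕ) := sInf_coe_insert t ht hx1
    have hcard' : (insert x t).card = t.card + 1 := Finset.card_insert_of_notMem hxnot
    have := ih (insert x t) (Finset.insert_nonempty x t) (by rw [hins, hcard']; omega) b hx2
    rwa [hins] at this

lemma D_card_bound (h : ℕ → ℕ) (f : Finset ℕ → Finset ℕ)
    (hconstr : ∀ s : Finset ℕ, InDom h s → (f s).card ≤ h (sInf (↑s : Set ℕ))) :
    ∀ (k : ℕ) (t : Finset ℕ), t.Nonempty → t.card + k ≤ h (sInf (↑t : Set ℕ)) →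
      ∀ F : Finset ℕ, ↑F ⊆ D f k t → F.card ≤ h (sInf (↑t : Set ℕ)) := by
  intro k
  induction k with
  | zero =>
    intro t ht hcard F hF
    have : F ⊆ f t := by exact_mod_cast (by simpa [D] using hF : (↑F : Set ℕ) ⊆ ↑(f t))
    exact le_trans (Finset.card_le_card this) (hconstr t ⟨ht, by omega⟩)
  | succ k ih =>
    intro t ht hcard F hF
    by_contra hlt
    push_neg at hlt
    have hFne : F.Nonempty := by
      rcases Finset.eq_empty_or_nonempty F with rfl | hne
      · simp at hlt
      · exact hne
    have hmem : ∀ b ∈ F, {x | (∀ y ∈ t, y < x) ∧ b ∈ D f k (insert x t)} ∈ U := by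
      intro b hb
      exact hF (Finset.mem_coe.2 hb)
    have hInter : (⋂ b ∈ F, {x | (∀ y ∈ t, y < x) ∧ b ∈ D f k (insert x t)}) ∈ U :=
      (Filter.biInter_finset_mem F).2 hmem
    obtain ⟨x, hx⟩ := Filter.nonempty_of_mem hInter
    simp only [Set.mem_iInter] at hx
    obtain ⟨b₀, hb₀⟩ := hFne
    have hx1 : ∀ y ∈ t, y < x := (hx b₀ hb₀).1
    have hxnot : x ∉ t := fun hxt => lt_irrefl x (hx1 x hxt)
    have hins : sInf (↑(insert x t) : Set ℕ) = sInf (↑t : Set ℕ) := sInf_coe_insert t ht hx1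
    have hcard' : (insert x t).card = t.card + 1 := Finset.card_insert_of_notMem hxnot
    have hsub : (↑F : Set ℕ) ⊆ D f k (insert x t) := by
      intro b hb
      exact (hx b (Finset.mem_coe.1 hb)).2
    have := ih (insert x t) (Finset.insert_nonempty x t) (by rw [hins, hcard']; omega) F hsub
    rw [hins] at this
    omega

lemma D_finite (h : ℕ → ℕ) (f : Finset ℕ → Finset ℕ)
    (hconstr : ∀ s : Finset ℕ, InDom h s → (f s).card ≤ h (sInf (↑s : Set ℕ)))
    (k : ℕ) (t : Finset ℕ) (ht : t.Nonempty) (hcard : t.card + k ≤ h (sInf (↑t : Set ℕ))) :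
    (D f k t).Finite := by
  by_contra hinf
  have hinf' : (D f k t).Infinite := hinf
  obtain ⟨F, hFsub, hFcard⟩ := Set.Infinite.exists_subset_card_eq hinf' (h (sInf (↑t : Set ℕ)) + 1)
  have := D_card_bound h f hconstr k t ht hcard F hFsub
  omega

/-- The invariant carried by the finite approximations to the free set. -/
def Inv (h : ℕ → ℕ) (f : Finset ℕ → Finset ℕ) (C : Finset ℕ) : Prop :=
  ∀ t : Finset ℕ, t ⊆ C → t.Nonempty → ∀ k : ℕ, t.card + k ≤ h (sInf (↑t : Set ℕ)) →
    ∀ b ∈ D f k t, b ∈ C → b ∈ t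

lemma step (h : ℕ → ℕ) (f : Finset ℕ → Finset ℕ)
    (hprog : ∀ s : Finset ℕ, InDom h s → ∀ y ∈ f s, sInf (↑s : Set ℕ) ≤ y)
    (hconstr : ∀ s : Finset ℕ, InDom h s → (f s).card ≤ h (sInf (↑s : Set ℕ)))
    (C : Finset ℕ) (hC : Inv h f C) :
    ∃ x : ℕ, (∀ y ∈ C, y < x) ∧ Inv h f (insert x C) := by
  classical
  set M := (C.powerset.sup fun t => h (sInf (↑t : Set ℕ))) + 1 with hM
  set P : Finset (Finset ℕ × ℕ × ℕ) := C.powerset ×ˢ (Finset.range M ×ˢ C) with hP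
  set T : Finset ℕ × ℕ × ℕ → Set ℕ := fun p =>
    {x | (p.1.Nonempty → p.1.card + p.2.1 ≤ h (sInf (↑p.1 : Set ℕ)) → x ∉ D f p.2.1 p.1) ∧
         (p.1.Nonempty → p.2.2 ∉ p.1 → p.1.card + 1 + p.2.1 ≤ h (sInf (↑p.1 : Set ℕ)) →
           ¬((∀ y ∈ p.1, y < x) ∧ p.2.2 ∈ D f p.2.1 (insert x p.1)))} with hT
  have hS0 : {x | ∀ y ∈ C, y < x} ∈ U := by
    apply cofinite_mem_U
    apply Set.Finite.subset (Set.finite_Iic (C.sup id))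
    intro x hx
    simp only [Set.mem_compl_iff, Set.mem_setOf_eq, not_forall] at hx
    obtain ⟨y, hy, hxy⟩ := hx
    exact Set.mem_Iic.2 (le_trans (not_lt.1 hxy) (Finset.le_sup (f := id) hy))
  have hTP : ∀ p ∈ P, T p ∈ U := by
    rintro ⟨t, k, b⟩ hp
    simp only [hP, Finset.mem_product, Finset.mem_powerset, Finset.mem_range] at hp
    obtain ⟨htC, hk, hbC⟩ := hp
    have hTsplit : T (t, k, b) =
        {x | t.Nonempty → t.card + k ≤ h (sInf (↑t : Set ℕ)) → x ∉ D f k t} ∩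
        {x | t.Nonempty → b ∉ t → t.card + 1 + k ≤ h (sInf (↑t : Set ℕ)) →
          ¬((∀ y ∈ t, y < x) ∧ b ∈ D f k (insert x t))} := by
      ext x; simp [hT, Set.mem_setOf_eq]
    rw [hTsplit]
    apply Filter.inter_mem
    · by_cases hne : t.Nonempty
      · by_cases hcard : t.card + k ≤ h (sInf (↑t : Set ℕ))
        · have hcompl : (D f k t)ᶜ ∈ U := cofinite_mem_U (by
            simpa using D_finite h f hconstr k t hne hcard)
          exact Filter.mem_of_superset hcompl (fun x hx _ _ => hx)
        · exact Filter.mem_of_superset Filter.univ_mem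
            (fun x _ h1 h2 => absurd h2 hcard)
      · exact Filter.mem_of_superset Filter.univ_mem
          (fun x _ h1 => absurd h1 hne)
    · by_cases hne : t.Nonempty
      · by_cases hbt : b ∈ t
        · exact Filter.mem_of_superset Filter.univ_mem
            (fun x _ _ h2 => absurd hbt h2)
        · by_cases hcard : t.card + 1 + k ≤ h (sInf (↑t : Set ℕ))
          · have hnot : b ∉ D f (k + 1) t := by
              intro hb
              exact hbt (hC t htC hne (k + 1) (by omega) b hb hbC)
            have hnotU : {x | (∀ y ∈ t, y < x) ∧ b ∈ D f k (insert x t)} ∉ U := hnot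
            have hcompl : {x | (∀ y ∈ t, y < x) ∧ b ∈ D f k (insert x t)}ᶜ ∈ U :=
              Ultrafilter.compl_mem_iff_notMem.2 hnotU
            refine Filter.mem_of_superset hcompl ?_
            intro x hx _ _ _
            exact hx
          · exact Filter.mem_of_superset Filter.univ_mem
              (fun x _ _ _ h3 => absurd h3 hcard)
      · exact Filter.mem_of_superset Filter.univ_mem
          (fun x _ h1 => absurd h1 hne)
  have hSP : (⋂ p ∈ P, T p) ∈ U := (Filter.biInter_finset_mem P).2 hTP
  have hS : ({x | ∀ y ∈ C, y < x} ∩ ⋂ p ∈ P, T p) ∈ U := Filter.inter_mem hS0 hSP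
  obtain ⟨x, hx0, hxP⟩ := Filter.nonempty_of_mem hS
  have hxT : ∀ p ∈ P, x ∈ T p := Set.mem_iInter₂.1 hxP
  have hx0' : ∀ y ∈ C, y < x := hx0
  refine ⟨x, hx0', ?_⟩
  intro t htsub htne k hk b hbD hbC
  by_cases hxt : x ∈ t
  · by_cases hbx : b = x
    · subst hbx; exact hxt
    · have hbC' : b ∈ C := by
        rcases Finset.mem_insert.1 hbC with hh | hh
        · exact absurd hh hbx
        · exact hh
      by_cases hbt : b ∈ t
      · exact hbt
      · exfalso
        set t' := t.erase x with ht'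
        have htx : insert x t' = t := Finset.insert_erase hxt
        have ht'C : t' ⊆ C := by
          intro y hy
          have hyt : y ∈ t := Finset.mem_of_mem_erase hy
          have hynx : y ≠ x := Finset.ne_of_mem_erase hy
          rcases Finset.mem_insert.1 (htsub hyt) with hh | hh
          · exact absurd hh hynx
          · exact hh
        by_cases ht'ne : t'.Nonempty
        · have hxgt : ∀ y ∈ t', y < x := fun y hy => hx0' y (ht'C hy)
          have hsInf : sInf (↑t : Set ℕ) = sInf (↑t' : Set ℕ) := by
            rw [← htx]; exact sInf_coe_insert t' ht'ne hxgt
          have hcard' : t.card = t'.card + 1 := by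
            rw [← htx, Finset.card_insert_of_notMem (Finset.notMem_erase x t)]
          have hkM : k < M := by
            have h1 : h (sInf (↑t' : Set ℕ)) ≤ C.powerset.sup fun u => h (sInf (↑u : Set ℕ)) :=
              Finset.le_sup (s := C.powerset) (f := fun u : Finset ℕ => h (sInf (↑u : Set ℕ))) (Finset.mem_powerset.2 ht'C)
            have h2 : t.card + k ≤ h (sInf (↑t' : Set ℕ)) := by rw [← hsInf]; exact hk
            omega
          have hpP : (t', k, b) ∈ P := by
            simp only [hP, Finset.mem_product, Finset.mem_powerset, Finset.mem_range]
            exact ⟨ht'C, hkM, hbC'⟩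
          have hbt' : b ∉ t' := fun hb => hbt (Finset.mem_of_mem_erase hb)
          have hcard2 : t'.card + 1 + k ≤ h (sInf (↑t' : Set ℕ)) := by
            have : t.card + k ≤ h (sInf (↑t' : Set ℕ)) := by rw [← hsInf]; exact hk
            omega
          exact (hxT _ hpP).2 ht'ne hbt' hcard2 ⟨hxgt, by rw [htx]; exact hbD⟩
        · have ht'empty : t' = ∅ := Finset.not_nonempty_iff_eq_empty.1 ht'ne
          have htsingle : t = {x} := by rw [← htx, ht'empty]; rfl
          have hsx : sInf (↑t : Set ℕ) = x := by
            rw [htsingle]; simp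
          have hge := D_ge h f hprog k t htne hk b hbD
          rw [hsx] at hge
          have := hx0' b hbC'
          omega
  · have htC : t ⊆ C := by
      intro y hy
      rcases Finset.mem_insert.1 (htsub hy) with hh | hh
      · exact absurd (hh ▸ hy) hxt
      · exact hh
    by_cases hbx : b = x
    · exfalso
      subst hbx
      have htne2 := htne
      obtain ⟨b₀, hb₀⟩ := htne2
      have hkM : k < M := by
        have h1 : h (sInf (↑t : Set ℕ)) ≤ C.powerset.sup fun u => h (sInf (↑u : Set ℕ)) :=
          Finset.le_sup (s := C.powerset) (f := fun u : Finset ℕ => h (sInf (↑u : Set ℕ))) (Finset.mem_powerset.2 htC)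
        omega
      have hpP : (t, k, b₀) ∈ P := by
        simp only [hP, Finset.mem_product, Finset.mem_powerset, Finset.mem_range]
        exact ⟨htC, hkM, htC hb₀⟩
      exact (hxT _ hpP).1 htne hk hbD
    · have hbC' : b ∈ C := by
        rcases Finset.mem_insert.1 hbC with hh | hh
        · exact absurd hh hbx
        · exact hh
      exact hC t htC htne k hk b hbD hbC'

noncomputable def chain (h : ℕ → ℕ) (f : Finset ℕ → Finset ℕ)
    (hprog : ∀ s : Finset ℕ, InDom h s → ∀ y ∈ f s, sInf (↑s : Set ℕ) ≤ y)
    (hconstr : ∀ s : Finset ℕ, InDom h s → (f s).card ≤ h (sInf (↑s : Set ℕ))) :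
    ℕ → {C : Finset ℕ // Inv h f C}
  | 0 => ⟨∅, by intro t htsub htne; rw [Finset.subset_empty.1 htsub] at htne; simp at htne⟩
  | n + 1 =>
    ⟨insert (step h f hprog hconstr (chain h f hprog hconstr n).1
        (chain h f hprog hconstr n).2).choose (chain h f hprog hconstr n).1,
      (step h f hprog hconstr (chain h f hprog hconstr n).1
        (chain h f hprog hconstr n).2).choose_spec.2⟩

end Stmt16Aux

open Stmt16Aux in
/-- Progressive Free Set Theorem: for every `h : ℕ → ℕ` and
every `h`-constrained progressive `f : [ℕ]^{≤h(·)} → [ℕ]^{<ω}` there is an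
infinite `f`-free set `G ⊆ ℕ`. -/
theorem stmt16 (h : ℕ → ℕ) (f : Finset ℕ → Finset ℕ)
    (hprog : ∀ s : Finset ℕ, InDom h s → ∀ y ∈ f s, sInf (↑s : Set ℕ) ≤ y)
    (hconstr : ∀ s : Finset ℕ, InDom h s → (f s).card ≤ h (sInf (↑s : Set ℕ))) :
    ∃ G : Set ℕ, G.Infinite ∧
      ∀ s : Finset ℕ, InDom h s → ↑s ⊆ G → ∀ y ∈ f s, y ∈ G → y ∈ s := by
  classical
  set ch := chain h f hprog hconstr with hch
  have hsub : ∀ n, (ch n).1 ⊆ (ch (n + 1)).1 := by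
    intro n
    rw [hch]
    show (chain h f hprog hconstr n).1 ⊆ _
    simp only [chain]
    exact Finset.subset_insert _ _
  have hmono : ∀ m n, m ≤ n → (ch m).1 ⊆ (ch n).1 := by
    intro m n hmn
    induction n with
    | zero => rw [Nat.le_zero.1 hmn]
    | succ n ih =>
      rcases Nat.lt_or_ge m (n + 1) with hlt | hge
      · exact (ih (by omega)).trans (hsub n)
      · rw [le_antisymm hmn hge]
  have hcard : ∀ n, (ch n).1.card = n := by
    intro n
    induction n with
    | zero => rfl
    | succ n ih =>
      rw [hch]
      show (insert (step h f hprog hconstr (chain h f hprog hconstr n).1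
        (chain h f hprog hconstr n).2).choose (chain h f hprog hconstr n).1).card = n + 1
      rw [Finset.card_insert_of_notMem, ← hch, ih]
      intro hmem
      exact lt_irrefl _ ((step h f hprog hconstr (chain h f hprog hconstr n).1
        (chain h f hprog hconstr n).2).choose_spec.1 _ hmem)
  refine ⟨{y | ∃ n, y ∈ (ch n).1}, ?_, ?_⟩
  · intro hfin
    have hall : ∀ n, (ch n).1 ⊆ hfin.toFinset := by
      intro n y hy
      exact hfin.mem_toFinset.2 ⟨n, hy⟩
    have := Finset.card_le_card (hall (hfin.toFinset.card + 1))
    rw [hcard] at this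
    omega
  · intro s hs hsG y hyf hyG
    have key : ∀ u : Finset ℕ, (∀ z ∈ u, ∃ n, z ∈ (ch n).1) → ∃ n, ∀ z ∈ u, z ∈ (ch n).1 := by
      intro u
      induction u using Finset.induction_on with
      | empty => exact fun _ => ⟨0, by simp⟩
      | @insert a u ha ih =>
        intro hu
        obtain ⟨n₂, h₂⟩ := ih (fun z hz => hu z (Finset.mem_insert_of_mem hz))
        obtain ⟨n₁, h₁⟩ := hu a (Finset.mem_insert_self _ _)
        refine ⟨max n₁ n₂, ?_⟩
        intro z hz
        rcases Finset.mem_insert.1 hz with rfl | hz'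
        · exact hmono n₁ _ (le_max_left _ _) h₁
        · exact hmono n₂ _ (le_max_right _ _) (h₂ z hz')
    obtain ⟨n, hn⟩ := key s (fun z hz => hsG (Finset.mem_coe.2 hz))
    obtain ⟨m, hm⟩ := hyG
    have hInv := (ch (max n m)).2
    refine hInv s (fun z hz => hmono n _ (le_max_left _ _) (hn z hz)) hs.1 0 (by simpa using hs.2)
      y ?_ (hmono m _ (le_max_right _ _) hm)
    show y ∈ D f 0 s
    simpa [D] using hyf
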